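/- Let C and D be n×n matrices over ℝ∪{−∞} with Tr(DC) ≤ 0, g ∈ (ℝ∪{−∞})ⁿ, and θ = max_{1≤i,j,k≤n}( C_{ik} + ((DC)*)_{kj} ). Define the n×n matrix S by S_{ij} = max( −θ + max_{1≤k≤n} C_{kj} , (DC)_{ij} ). Then x ∈ ℝⁿ is a feasible minimizer — i.e. max(max_j((DC)_{ij}+x_j), g_i) ≤ x_i for all i, and F(x) = θ where F(x) = (max_{i,j}(C_{ij}+x_j)) + (max_k(−x_k)) — if and only if there exists u ∈ ℝⁿ with u_i ≥ g_i for all i and x_i = max_{1≤j≤n}( (S*)_{ij} + u_j ) for all i. -/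

import Mathlib

/-!
Max-plus semifield modeled as `WithBot ℝ` (= ℝ ∪ {−∞}); `⊔` is max-plus addition.
`mmul D C` is the max-plus product DC; the matrix S = θ⁻¹11ᵀC ⊕ DC has entries
S_{ij} = max(−θ + max_k C_{kj}, (DC)_{ij}).
-/

/-- Max-plus matrix product: (A⊗B)_{ij} = max_k (A_{ik} + B_{kj}). -/
noncomputable def mmul {n : ℕ} (A B : Fin n → Fin n → WithBot ℝ) :
    Fin n → Fin n → WithBot ℝ :=
  fun i j => Finset.univ.sup fun k => A i k + B k j

/-- Max-plus matrix powers, with A⁰ = I (0 on the diagonal, −∞ elsewhere). -/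
noncomputable def mpow {n : ℕ} (A : Fin n → Fin n → WithBot ℝ) :
    ℕ → Fin n → Fin n → WithBot ℝ
  | 0 => fun i j => if i = j then (0 : WithBot ℝ) else ⊥
  | m + 1 => mmul (mpow A m) A

/-- Kleene star: (A*)_{ij} = max_{0 ≤ m ≤ n−1} (A^m)_{ij}. -/
noncomputable def mstar {n : ℕ} (A : Fin n → Fin n → WithBot ℝ) :
    Fin n → Fin n → WithBot ℝ :=
  fun i j => (Finset.range n).sup fun m => mpow A m i j

/-- The makespan objective F(x) = (max_{i,j}(C_{ij} + x_j)) + (max_k (−x_k)). -/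
noncomputable def makespan {n : ℕ} (C : Fin n → Fin n → WithBot ℝ)
    (x : Fin n → ℝ) : WithBot ℝ :=
  (Finset.univ.sup fun i => Finset.univ.sup fun j => C i j + ((x j : ℝ) : WithBot ℝ)) +
    (Finset.univ.sup fun k => ((-(x k) : ℝ) : WithBot ℝ))

/-- Characterization of the feasible minimizers of the makespan under finish-start and
early-start constraints: x = (θ⁻¹11ᵀC ⊕ DC)*u with u ≥ g, u ∈ ℝⁿ. -/

lemma wadd_sup (a b c : WithBot ℝ) : a + (b ⊔ c) = (a + b) ⊔ (a + c) := by
  rcases a with _ | a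
  · show (⊥ : WithBot ℝ) = (⊥ : WithBot ℝ) ⊔ ⊥; simp
  · rcases le_total b c with h | h
    · rw [sup_eq_right.2 h]; exact (sup_eq_right.2 (add_le_add_right h _)).symm
    · rw [sup_eq_left.2 h]; exact (sup_eq_left.2 (add_le_add_right h _)).symm

lemma wsup_add (a b c : WithBot ℝ) : (b ⊔ c) + a = (b + a) ⊔ (c + a) := by
  rw [add_comm, wadd_sup, add_comm b a, add_comm c a]

lemma wadd_finsup {α : Type*} (s : Finset α) (a : WithBot ℝ) (f : α → WithBot ℝ) :
    a + s.sup f = s.sup fun x => a + f x := by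
  induction s using Finset.cons_induction with
  | empty => show a + ⊥ = ⊥; exact WithBot.add_bot a
  | cons x s hx ih => rw [Finset.sup_cons, Finset.sup_cons, wadd_sup, ih]

lemma wfinsup_add {α : Type*} (s : Finset α) (a : WithBot ℝ) (f : α → WithBot ℝ) :
    s.sup f + a = s.sup fun x => f x + a := by
  rw [add_comm, wadd_finsup]; simp [add_comm]







variable {n : ℕ}

lemma sup_ite_left (i : Fin n) (v : WithBot ℝ) :
    (Finset.univ.sup fun k : Fin n => if i = k then v else ⊥) = v := by
  refine le_antisymm (Finset.sup_le fun k _ => ?_) ?_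
  · split <;> simp
  · have := Finset.le_sup (f := fun k : Fin n => if i = k then v else ⊥)
      (Finset.mem_univ i)
    simpa using this

lemma sup_ite_right (j : Fin n) (v : WithBot ℝ) :
    (Finset.univ.sup fun k : Fin n => if k = j then v else ⊥) = v := by
  refine le_antisymm (Finset.sup_le fun k _ => ?_) ?_
  · split <;> simp
  · have := Finset.le_sup (f := fun k : Fin n => if k = j then v else ⊥)
      (Finset.mem_univ j)
    simpa using this

lemma mmul_assoc (A B C : Fin n → Fin n → WithBot ℝ) :
    mmul (mmul A B) C = mmul A (mmul B C) := by
  funext i j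
  show (Finset.univ.sup fun k => (Finset.univ.sup fun l => A i l + B l k) + C k j) = _
  calc (Finset.univ.sup fun k => (Finset.univ.sup fun l => A i l + B l k) + C k j)
      = Finset.univ.sup fun k => Finset.univ.sup fun l => (A i l + B l k) + C k j := by
        refine Finset.sup_congr rfl fun k _ => ?_
        rw [wfinsup_add]
    _ = Finset.univ.sup fun l => Finset.univ.sup fun k => A i l + (B l k + C k j) := by
        rw [Finset.sup_comm]
        refine Finset.sup_congr rfl fun l _ => Finset.sup_congr rfl fun k _ => ?_
        rw [add_assoc]
    _ = Finset.univ.sup fun l => A i l + Finset.univ.sup fun k => B l k + C k j := by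
        refine Finset.sup_congr rfl fun l _ => ?_
        rw [wadd_finsup]

lemma mpow_succ_left (A : Fin n → Fin n → WithBot ℝ) (m : ℕ) :
    mpow A (m + 1) = mmul A (mpow A m) := by
  induction m with
  | zero =>
    show mmul (mpow A 0) A = mmul A (mpow A 0)
    funext i j
    show (Finset.univ.sup fun k => (if i = k then (0:WithBot ℝ) else ⊥) + A k j)
        = Finset.univ.sup fun k => A i k + (if k = j then (0:WithBot ℝ) else ⊥)
    have h1 : ∀ k : Fin n, (if i = k then (0:WithBot ℝ) else ⊥) + A k j
        = if i = k then A i j else ⊥ := by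
      intro k
      by_cases h : i = k
      · subst h; simp [zero_add]
      · simp [h]
    have h2 : ∀ k : Fin n, A i k + (if k = j then (0:WithBot ℝ) else ⊥)
        = if k = j then A i j else ⊥ := by
      intro k
      by_cases h : k = j
      · subst h; simp [add_zero]
      · simp [h, WithBot.add_bot]
    simp only [h1, h2]
    rw [sup_ite_left, sup_ite_right]
  | succ k ih =>
    show mmul (mpow A (k+1)) A = _
    calc mmul (mpow A (k+1)) A = mmul (mmul A (mpow A k)) A := by rw [ih]
      _ = mmul A (mmul (mpow A k) A) := mmul_assoc A (mpow A k) A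
      _ = mmul A (mpow A (k+1)) := rfl

noncomputable def vwt {n : ℕ} (M : Fin n → Fin n → WithBot ℝ) : List (Fin n) → WithBot ℝ
  | [] => 0
  | [_] => 0
  | a :: b :: l => M a b + vwt M (b :: l)

@[simp] lemma vwt_nil (M : Fin n → Fin n → WithBot ℝ) : vwt M [] = 0 := rfl
@[simp] lemma vwt_single (M : Fin n → Fin n → WithBot ℝ) (a : Fin n) : vwt M [a] = 0 := rfl
lemma vwt_cons_cons (M : Fin n → Fin n → WithBot ℝ) (a b : Fin n) (l : List (Fin n)) :
    vwt M (a :: b :: l) = M a b + vwt M (b :: l) := rfl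

lemma vwt_append_cons (M : Fin n → Fin n → WithBot ℝ) :
    ∀ (xs : List (Fin n)) (k : Fin n) (ys : List (Fin n)),
      vwt M (xs ++ k :: ys) = vwt M (xs ++ [k]) + vwt M (k :: ys) := by
  intro xs
  induction xs with
  | nil => intro k ys; simp [vwt_single, zero_add]
  | cons a xs ih =>
    intro k ys
    cases xs with
    | nil => simp [vwt_cons_cons, vwt_single, add_zero, add_assoc]
    | cons b xs' =>
      show vwt M (a :: b :: (xs' ++ k :: ys)) = _
      rw [vwt_cons_cons, ← List.cons_append, ih, ← add_assoc]
      rfl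

lemma vwt_le_mpow (M : Fin n → Fin n → WithBot ℝ) :
    ∀ (l : List (Fin n)) (a b : Fin n),
      vwt M (a :: l ++ [b]) ≤ mpow M (l.length + 1) a b := by
  intro l
  induction l with
  | nil =>
    intro a b
    show vwt M [a, b] ≤ mpow M 1 a b
    rw [mpow_succ_left]
    have : vwt M [a, b] = M a b := by rw [vwt_cons_cons, vwt_single, add_zero]
    rw [this]
    show M a b ≤ Finset.univ.sup fun k => M a k + mpow M 0 k b
    have : M a b + mpow M 0 b b ≤ Finset.univ.sup fun k => M a k + mpow M 0 k b :=
      Finset.le_sup (f := fun k => M a k + mpow M 0 k b) (Finset.mem_univ b)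
    simpa [mpow, add_zero] using this
  | cons c l ih =>
    intro a b
    show vwt M (a :: c :: (l ++ [b])) ≤ mpow M (l.length + 1 + 1) a b
    rw [vwt_cons_cons, mpow_succ_left]
    calc M a c + vwt M (c :: l ++ [b]) ≤ M a c + mpow M (l.length + 1) c b :=
          add_le_add_right (ih c b) _
      _ ≤ Finset.univ.sup fun k => M a k + mpow M (l.length + 1) k b :=
          Finset.le_sup (f := fun k => M a k + mpow M (l.length + 1) k b)
            (Finset.mem_univ c)

lemma mpow_le_of_vwt (M : Fin n → Fin n → WithBot ℝ) :
    ∀ (m : ℕ) (p : WithBot ℝ) (a b : Fin n) (x : WithBot ℝ),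
      (∀ l : List (Fin n), l.length = m → p + vwt M (a :: l ++ [b]) ≤ x) →
      p + mpow M (m + 1) a b ≤ x := by
  intro m
  induction m with
  | zero =>
    intro p a b x h
    have h0 := h [] rfl
    have : vwt M [a, b] = M a b := by rw [vwt_cons_cons, vwt_single, add_zero]
    rw [show ([a] ++ [b] : List (Fin n)) = [a, b] from rfl, this] at h0
    rw [mpow_succ_left]
    show p + (Finset.univ.sup fun k => M a k + mpow M 0 k b) ≤ x
    rw [wadd_finsup]
    refine Finset.sup_le fun k _ => ?_
    by_cases hk : k = b
    · subst hk
      simpa [mpow, add_zero] using h0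
    · have : mpow M 0 k b = ⊥ := by simp [mpow, hk]
      simp [this, WithBot.add_bot]
  | succ m ih =>
    intro p a b x h
    rw [mpow_succ_left]
    show p + (Finset.univ.sup fun k => M a k + mpow M (m+1) k b) ≤ x
    rw [wadd_finsup]
    refine Finset.sup_le fun k _ => ?_
    rw [← add_assoc]
    refine ih (p + M a k) k b x fun l hl => ?_
    have := h (k :: l) (by simp [hl])
    simp only [List.cons_append] at this
    rw [vwt_cons_cons] at this
    rw [add_assoc]
    exact this

lemma dup_split {α : Type*} {x : α} : ∀ {l : List α}, List.Duplicate x l →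
    ∃ t1 t2 t3 : List α, l = t1 ++ x :: (t2 ++ x :: t3) := by
  intro l h
  induction h with
  | cons_mem hm =>
    rcases List.append_of_mem hm with ⟨s, t, rfl⟩
    exact ⟨[], s, t, rfl⟩
  | @cons_duplicate y _ _ ih =>
    rcases ih with ⟨t1, t2, t3, rfl⟩
    exact ⟨y :: t1, t2, t3, rfl⟩

lemma exists_dup_of_long {l : List (Fin n)} (h : n < l.length) :
    ∃ (x : Fin n) (t1 t2 t3 : List (Fin n)), l = t1 ++ x :: (t2 ++ x :: t3) := by
  have hnd : ¬ l.Nodup := fun hnd => by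
    have := hnd.length_le_card
    simp [Fintype.card_fin] at this
    omega
  rcases List.exists_duplicate_iff_not_nodup.2 hnd with ⟨x, hx⟩
  rcases dup_split hx with ⟨t1, t2, t3, rfl⟩
  exact ⟨x, t1, t2, t3, rfl⟩

lemma closed_vwt_le (M : Fin n → Fin n → WithBot ℝ) (hn : 1 ≤ n)
    (hTr : ∀ m ∈ Finset.Icc 1 n, ∀ i, mpow M m i i ≤ 0) :
    ∀ (N : ℕ) (l : List (Fin n)) (a : Fin n), l.length ≤ N →
      vwt M (a :: l ++ [a]) ≤ 0 := by
  intro N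
  induction N with
  | zero =>
    intro l a hl
    have hl0 : l = [] := List.length_eq_zero_iff.1 (Nat.le_zero.1 hl)
    subst hl0
    calc vwt M (a :: [] ++ [a]) ≤ mpow M 1 a a := vwt_le_mpow M [] a a
      _ ≤ 0 := hTr 1 (Finset.mem_Icc.2 ⟨le_refl 1, hn⟩) a
  | succ N ih =>
    intro l a hl
    by_cases h : l.length + 1 ≤ n
    · calc vwt M (a :: l ++ [a]) ≤ mpow M (l.length + 1) a a := vwt_le_mpow M l a a
        _ ≤ 0 := hTr _ (Finset.mem_Icc.2 ⟨Nat.le_add_left 1 _, h⟩) a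
    · push_neg at h
      have hlong : n < (a :: l).length := by simp; omega
      rcases exists_dup_of_long hlong with ⟨y, t1, t2, t3, hdec⟩
      cases t1 with
      | nil =>
        simp only [List.nil_append] at hdec
        injection hdec with h1 h2
        subst h1
        subst h2
        have hll : t2.length + t3.length + 1 ≤ N + 1 := by
          simp only [List.length_append, List.length_cons] at hl; omega
        have E : a :: (t2 ++ a :: t3) ++ [a] = (a :: t2) ++ a :: (t3 ++ [a]) := by
          simp
        rw [E, vwt_append_cons M (a :: t2) a (t3 ++ [a])]
        have h1' : vwt M ((a :: t2) ++ [a]) ≤ 0 := by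
          have := ih t2 a (by omega)
          simpa using this
        have h2' : vwt M (a :: (t3 ++ [a])) ≤ 0 := by
          have := ih t3 a (by omega)
          simpa using this
        exact add_nonpos h1' h2'
      | cons a' t1' =>
        rw [List.cons_append] at hdec
        injection hdec with h1 h2
        subst h1
        subst h2
        have hll : t1'.length + t2.length + t3.length + 2 ≤ N + 1 := by
          simp only [List.length_append, List.length_cons] at hl; omega
        have E1 : a :: (t1' ++ y :: (t2 ++ y :: t3)) ++ [a]
            = (a :: t1') ++ y :: (t2 ++ y :: (t3 ++ [a])) := by simp
        rw [E1, vwt_append_cons M (a :: t1') y _]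
        have E2 : y :: (t2 ++ y :: (t3 ++ [a])) = (y :: t2) ++ y :: (t3 ++ [a]) := by
          simp
        rw [E2, vwt_append_cons M (y :: t2) y _]
        have hmid : vwt M ((y :: t2) ++ [y]) ≤ 0 := by
          have := ih t2 y (by omega)
          simpa using this
        have hrest : vwt M ((a :: t1') ++ [y]) + vwt M (y :: (t3 ++ [a])) ≤ 0 := by
          rw [← vwt_append_cons M (a :: t1') y (t3 ++ [a])]
          have E3 : (a :: t1') ++ y :: (t3 ++ [a]) = a :: (t1' ++ y :: t3) ++ [a] := by
            simp
          rw [E3]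
          exact ih (t1' ++ y :: t3) a (by simp; omega)
        calc vwt M ((a :: t1') ++ [y]) + (vwt M ((y :: t2) ++ [y]) + vwt M (y :: (t3 ++ [a])))
            ≤ vwt M ((a :: t1') ++ [y]) + (0 + vwt M (y :: (t3 ++ [a]))) :=
              add_le_add_right (add_le_add_left hmid _) _
          _ = vwt M ((a :: t1') ++ [y]) + vwt M (y :: (t3 ++ [a])) := by rw [zero_add]
          _ ≤ 0 := hrest

lemma vwt_le_mstar (M : Fin n → Fin n → WithBot ℝ) (hn : 1 ≤ n)
    (hTr : ∀ m ∈ Finset.Icc 1 n, ∀ i, mpow M m i i ≤ 0) :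
    ∀ (N : ℕ) (l : List (Fin n)) (a b : Fin n), l.length ≤ N →
      vwt M (a :: l ++ [b]) ≤ mstar M a b := by
  have hzero : ∀ a : Fin n, (0 : WithBot ℝ) ≤ mstar M a a := by
    intro a
    have := Finset.le_sup (f := fun m => mpow M m a a) (Finset.mem_range.2 hn)
    exact le_trans (by simp [mpow]) this
  intro N
  induction N with
  | zero =>
    intro l a b hl
    have hl0 : l = [] := List.length_eq_zero_iff.1 (Nat.le_zero.1 hl)
    subst hl0
    by_cases h : 2 ≤ n
    · calc vwt M (a :: [] ++ [b]) ≤ mpow M 1 a b := vwt_le_mpow M [] a b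
        _ ≤ mstar M a b := Finset.le_sup (f := fun m => mpow M m a b)
            (Finset.mem_range.2 (by omega))
    · -- n = 1, so a = b
      have hn1 : n = 1 := by omega
      have hab : a = b := by
        subst hn1
        exact Subsingleton.elim a b
      subst hab
      calc vwt M (a :: [] ++ [a]) ≤ 0 := closed_vwt_le M hn hTr 0 [] a le_rfl
        _ ≤ mstar M a a := hzero a
  | succ N ih =>
    intro l a b hl
    by_cases h : l.length + 2 ≤ n
    · calc vwt M (a :: l ++ [b]) ≤ mpow M (l.length + 1) a b := vwt_le_mpow M l a b
        _ ≤ mstar M a b := Finset.le_sup (f := fun m => mpow M m a b)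
            (Finset.mem_range.2 (by omega))
    · push_neg at h
      have hlong : n < (a :: l ++ [b]).length := by simp; omega
      rcases exists_dup_of_long hlong with ⟨y, t1, t2, t3, hdec⟩
      -- cut the middle cycle
      have hcut : vwt M (a :: l ++ [b]) ≤ vwt M (t1 ++ y :: t3) := by
        rw [hdec, vwt_append_cons M t1 y (t2 ++ y :: t3), vwt_append_cons M t1 y t3]
        refine add_le_add_right ?_ _
        rw [show y :: (t2 ++ y :: t3) = (y :: t2) ++ y :: t3 from by simp,
          vwt_append_cons M (y :: t2) y t3]
        have hmid : vwt M ((y :: t2) ++ [y]) ≤ 0 := by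
          have := closed_vwt_le M hn hTr t2.length t2 y le_rfl
          simpa using this
        calc vwt M ((y :: t2) ++ [y]) + vwt M (y :: t3)
            ≤ 0 + vwt M (y :: t3) := add_le_add_left hmid _
          _ = vwt M (y :: t3) := zero_add _
      refine le_trans hcut ?_
      -- now identify t1 ++ y :: t3 as a walk from a to b
      rcases List.eq_nil_or_concat t3 with rfl | ⟨t3', z, rfl⟩
      · -- t3 = []
        have hdec' : (a :: l) ++ [b] = (t1 ++ y :: t2) ++ [y] := by
          rw [show a :: l ++ [b] = (a :: l) ++ [b] from rfl] at hdec
          rw [hdec]; simp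
        obtain ⟨h1, h2⟩ := List.append_inj' hdec' rfl
        injection h2 with hyb _
        subst hyb
        cases t1 with
        | nil =>
          have hay : a = b := by
            simp only [List.nil_append] at h1
            injection h1 with h1a _
          subst hay
          show vwt M [a] ≤ mstar M a a
          simpa using hzero a
        | cons a' t1' =>
          have h1' : a' = a ∧ l = t1' ++ b :: t2 := by
            rw [List.cons_append] at h1
            injection h1 with hx hy
            exact ⟨hx.symm, hy⟩
          obtain ⟨rfl, rfl⟩ := h1'
          have hlen : t1'.length ≤ N := by
            simp only [List.length_append, List.length_cons] at hl; omega
          have := ih t1' a' b hlen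
          simpa using this
      · -- t3 = t3' ++ [z]
        simp only [List.concat_eq_append] at hdec ⊢
        have hdec' : (a :: l) ++ [b] = (t1 ++ y :: (t2 ++ y :: t3')) ++ [z] := by
          rw [show a :: l ++ [b] = (a :: l) ++ [b] from rfl] at hdec
          rw [hdec]; simp
        obtain ⟨h1, h2⟩ := List.append_inj' hdec' rfl
        injection h2 with hzb _
        subst hzb
        cases t1 with
        | nil =>
          have h1' : y = a ∧ l = t2 ++ y :: t3' := by
            simp only [List.nil_append] at h1
            injection h1 with hx hy
            exact ⟨hx.symm, hy⟩
          obtain ⟨rfl, rfl⟩ := h1'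
          have hlen : t3'.length ≤ N := by
            simp only [List.length_append, List.length_cons] at hl; omega
          have := ih t3' y b hlen
          simpa using this
        | cons a' t1' =>
          have h1' : a' = a ∧ l = t1' ++ y :: (t2 ++ y :: t3') := by
            rw [List.cons_append] at h1
            injection h1 with hx hy
            exact ⟨hx.symm, hy⟩
          obtain ⟨rfl, rfl⟩ := h1'
          have hlen : (t1' ++ y :: t3').length ≤ N := by
            simp only [List.length_append, List.length_cons] at hl ⊢; omega
          have := ih (t1' ++ y :: t3') a' b hlen
          rw [show (a' :: t1') ++ y :: (t3' ++ [b]) = a' :: (t1' ++ y :: t3') ++ [b]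
            from by simp]
          exact this

lemma mstar_diag_nonneg (M : Fin n → Fin n → WithBot ℝ) (hn : 1 ≤ n) (a : Fin n) :
    (0 : WithBot ℝ) ≤ mstar M a a := by
  have := Finset.le_sup (f := fun m => mpow M m a a) (Finset.mem_range.2 hn)
  exact le_trans (by simp [mpow]) this

lemma mstar_diag_nonpos (M : Fin n → Fin n → WithBot ℝ)
    (hTr : ∀ m ∈ Finset.Icc 1 n, ∀ i, mpow M m i i ≤ 0) (a : Fin n) :
    mstar M a a ≤ 0 := by
  refine Finset.sup_le fun m hm => ?_
  rcases Nat.eq_zero_or_pos m with rfl | hm1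
  · simp [mpow]
  · exact hTr m (Finset.mem_Icc.2 ⟨hm1, le_of_lt (Finset.mem_range.1 hm)⟩) a

lemma mpow_le_mstar (M : Fin n → Fin n → WithBot ℝ) (hn : 1 ≤ n)
    (hTr : ∀ m ∈ Finset.Icc 1 n, ∀ i, mpow M m i i ≤ 0) :
    ∀ (m : ℕ) (a b : Fin n), mpow M m a b ≤ mstar M a b := by
  intro m a b
  rcases m with _ | m
  · by_cases hab : a = b
    · subst hab
      simpa [mpow] using mstar_diag_nonneg M hn a
    · simp [mpow, hab]
  · have h := mpow_le_of_vwt M m 0 a b (mstar M a b) fun l hl => by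
      rw [zero_add]
      exact vwt_le_mstar M hn hTr l.length l a b le_rfl
    rwa [zero_add] at h

lemma mmul_pow_zero_right (M X : Fin n → Fin n → WithBot ℝ) :
    mmul X (mpow M 0) = X := by
  funext i j
  show (Finset.univ.sup fun k => X i k + mpow M 0 k j) = X i j
  have h2 : ∀ k : Fin n, X i k + mpow M 0 k j = if k = j then X i j else ⊥ := by
    intro k
    by_cases h : k = j
    · subst h; simp [mpow, add_zero]
    · simp [mpow, h, WithBot.add_bot]
  simp only [h2]
  exact sup_ite_right j (X i j)

lemma mpow_add (M : Fin n → Fin n → WithBot ℝ) (p q : ℕ) :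
    mpow M (p + q) = mmul (mpow M p) (mpow M q) := by
  induction q with
  | zero => rw [Nat.add_zero, mmul_pow_zero_right]
  | succ q ih =>
    show mpow M ((p + q) + 1) = _
    show mmul (mpow M (p + q)) M = _
    rw [ih, mmul_assoc]
    rfl

lemma step_mstar_le (M : Fin n → Fin n → WithBot ℝ) (hn : 1 ≤ n)
    (hTr : ∀ m ∈ Finset.Icc 1 n, ∀ i, mpow M m i i ≤ 0) (i j l : Fin n) :
    M i j + mstar M j l ≤ mstar M i l := by
  rw [show mstar M j l = (Finset.range n).sup fun m => mpow M m j l from rfl, wadd_finsup]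
  refine Finset.sup_le fun m _ => ?_
  calc M i j + mpow M m j l
      ≤ Finset.univ.sup fun k => M i k + mpow M m k l :=
        Finset.le_sup (f := fun k => M i k + mpow M m k l) (Finset.mem_univ j)
    _ = mpow M (m + 1) i l := by rw [mpow_succ_left]; rfl
    _ ≤ mstar M i l := mpow_le_mstar M hn hTr (m + 1) i l

lemma mstar_mstar_le (M : Fin n → Fin n → WithBot ℝ) (hn : 1 ≤ n)
    (hTr : ∀ m ∈ Finset.Icc 1 n, ∀ i, mpow M m i i ≤ 0) (i j l : Fin n) :
    mstar M i j + mstar M j l ≤ mstar M i l := by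
  rw [show mstar M i j = (Finset.range n).sup fun m => mpow M m i j from rfl, wfinsup_add]
  refine Finset.sup_le fun p _ => ?_
  rw [show mstar M j l = (Finset.range n).sup fun m => mpow M m j l from rfl, wadd_finsup]
  refine Finset.sup_le fun q _ => ?_
  calc mpow M p i j + mpow M q j l
      ≤ Finset.univ.sup fun k => mpow M p i k + mpow M q k l :=
        Finset.le_sup (f := fun k => mpow M p i k + mpow M q k l) (Finset.mem_univ j)
    _ = mpow M (p + q) i l := by rw [mpow_add]; rfl
    _ ≤ mstar M i l := mpow_le_mstar M hn hTr (p + q) i l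

section Smat

variable (A : Fin n → Fin n → WithBot ℝ) (cc : Fin n → WithBot ℝ) (θ : ℝ)

lemma neg_theta_add_theta : ((-θ : ℝ) : WithBot ℝ) + ((θ : ℝ) : WithBot ℝ) = 0 := by
  rw [← WithBot.coe_add]
  norm_num

lemma mpow_one (M : Fin n → Fin n → WithBot ℝ) : mpow M 1 = M := by
  rw [show (1 : ℕ) = 0 + 1 from rfl, mpow_succ_left, mmul_pow_zero_right]

lemma S_walk_bound (hn : 1 ≤ n)
    (hTr : ∀ m ∈ Finset.Icc 1 n, ∀ i, mpow A m i i ≤ 0)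
    (hθc : ∀ q p, cc q + mstar A q p ≤ ((θ : ℝ) : WithBot ℝ)) :
    ∀ (l : List (Fin n)) (a b : Fin n),
      vwt (fun a b => (((-θ : ℝ) : WithBot ℝ) + cc b) ⊔ A a b) (a :: l ++ [b]) ≤
        mstar A a b ⊔ (Finset.univ.sup fun p => Finset.univ.sup fun q =>
          mstar A a p + (((-θ : ℝ) : WithBot ℝ) + cc q) + mstar A q b) := by
  set S : Fin n → Fin n → WithBot ℝ :=
    fun a b => (((-θ : ℝ) : WithBot ℝ) + cc b) ⊔ A a b with hS
  set Bc : Fin n → WithBot ℝ := fun b => ((-θ : ℝ) : WithBot ℝ) + cc b with hBc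
  have hTle : ∀ (a b p q : Fin n),
      mstar A a p + Bc q + mstar A q b ≤
      Finset.univ.sup fun p => Finset.univ.sup fun q =>
        mstar A a p + Bc q + mstar A q b := by
    intro a b p q
    calc mstar A a p + Bc q + mstar A q b
        ≤ Finset.univ.sup fun q' => mstar A a p + Bc q' + mstar A q' b :=
          Finset.le_sup (f := fun q' => mstar A a p + Bc q' + mstar A q' b)
            (Finset.mem_univ q)
      _ ≤ _ := Finset.le_sup
            (f := fun p' => Finset.univ.sup fun q' => mstar A a p' + Bc q' + mstar A q' b)
            (Finset.mem_univ p)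
  have hBcle : ∀ (a b q : Fin n), Bc q + mstar A q b ≤
      mstar A a a + Bc q + mstar A q b := by
    intro a b q
    calc Bc q + mstar A q b = 0 + Bc q + mstar A q b := by rw [zero_add]
      _ ≤ mstar A a a + Bc q + mstar A q b := by
          refine add_le_add_left (add_le_add_left (mstar_diag_nonneg A hn a) _) _
  intro l
  induction l with
  | nil =>
    intro a b
    have : vwt S (a :: [] ++ [b]) = S a b := by
      show vwt S [a, b] = S a b
      rw [vwt_cons_cons, vwt_single, add_zero]
    rw [this]
    refine sup_le ?_ ?_
    · -- Bc b part
      refine le_trans ?_ le_sup_right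
      refine le_trans ?_ (hTle a b a b)
      calc Bc b = 0 + Bc b + 0 := by rw [zero_add, add_zero]
        _ ≤ mstar A a a + Bc b + mstar A b b :=
            add_le_add (add_le_add_left (mstar_diag_nonneg A hn a) _)
              (mstar_diag_nonneg A hn b)
    · -- A a b part
      refine le_trans ?_ le_sup_left
      conv_lhs => rw [← mpow_one A]
      exact mpow_le_mstar A hn hTr 1 a b
  | cons h l ih =>
    intro a b
    show vwt S (a :: h :: (l ++ [b])) ≤ _
    rw [vwt_cons_cons]
    have step : vwt S (h :: l ++ [b]) ≤ mstar A h b ⊔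
        (Finset.univ.sup fun p => Finset.univ.sup fun q =>
          mstar A h p + Bc q + mstar A q b) := ih h b
    calc S a h + vwt S (h :: (l ++ [b]))
        ≤ (Bc h ⊔ A a h) + (mstar A h b ⊔
            (Finset.univ.sup fun p => Finset.univ.sup fun q =>
              mstar A h p + Bc q + mstar A q b)) := add_le_add_right step _
      _ ≤ _ := by
        rw [wsup_add, wadd_sup, wadd_sup]
        refine sup_le (sup_le ?_ ?_) (sup_le ?_ ?_)
        · -- Bc h + mstar A h b
          refine le_trans ?_ le_sup_right
          exact le_trans (hBcle a b h) (hTle a b a h)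
        · -- Bc h + sup sup
          rw [wadd_finsup]
          refine le_trans ?_ le_sup_right
          refine Finset.sup_le fun p _ => ?_
          rw [wadd_finsup]
          refine Finset.sup_le fun q _ => ?_
          have key : Bc h + (mstar A h p + Bc q + mstar A q b)
              = (((-θ : ℝ) : WithBot ℝ) + (cc h + mstar A h p)) + (Bc q + mstar A q b) := by
            show (((-θ : ℝ) : WithBot ℝ) + cc h) + _ = _
            abel
          rw [key]
          calc (((-θ : ℝ) : WithBot ℝ) + (cc h + mstar A h p)) + (Bc q + mstar A q b)
              ≤ (((-θ : ℝ) : WithBot ℝ) + ((θ : ℝ) : WithBot ℝ)) + (Bc q + mstar A q b) :=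
                add_le_add_left (add_le_add_right (hθc h p) _) _
            _ = Bc q + mstar A q b := by rw [neg_theta_add_theta, zero_add]
            _ ≤ mstar A a a + Bc q + mstar A q b := hBcle a b q
            _ ≤ _ := hTle a b a q
        · -- A a h + mstar A h b
          refine le_trans ?_ le_sup_left
          exact step_mstar_le A hn hTr a h b
        · -- A a h + sup sup
          rw [wadd_finsup]
          refine le_trans ?_ le_sup_right
          refine Finset.sup_le fun p _ => ?_
          rw [wadd_finsup]
          refine Finset.sup_le fun q _ => ?_
          have key : A a h + (mstar A h p + Bc q + mstar A q b)
              = (A a h + mstar A h p) + Bc q + mstar A q b := by abel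
          rw [key]
          refine le_trans ?_ (hTle a b p q)
          refine add_le_add_left (add_le_add_left ?_ _) _
          exact step_mstar_le A hn hTr a h p
end Smat

lemma S_diag (A : Fin n → Fin n → WithBot ℝ) (cc : Fin n → WithBot ℝ) (θ : ℝ)
    (hn : 1 ≤ n)
    (hTr : ∀ m ∈ Finset.Icc 1 n, ∀ i, mpow A m i i ≤ 0)
    (hθc : ∀ q p, cc q + mstar A q p ≤ ((θ : ℝ) : WithBot ℝ)) :
    ∀ m ∈ Finset.Icc 1 n, ∀ i,
      mpow (fun a b => (((-θ : ℝ) : WithBot ℝ) + cc b) ⊔ A a b) m i i ≤ 0 := by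
  intro m hm i
  rcases Nat.exists_eq_add_of_lt (Nat.lt_of_lt_of_le Nat.zero_lt_one
    (Finset.mem_Icc.1 hm).1) with ⟨m', rfl⟩
  rw [Nat.zero_add]
  have h := mpow_le_of_vwt (fun a b => (((-θ : ℝ) : WithBot ℝ) + cc b) ⊔ A a b)
    m' 0 i i 0 fun l hl => ?_
  · rwa [zero_add] at h
  · rw [zero_add]
    refine le_trans (S_walk_bound A cc θ hn hTr hθc l i i) (sup_le ?_ ?_)
    · exact mstar_diag_nonpos A hTr i
    · refine Finset.sup_le fun p _ => Finset.sup_le fun q _ => ?_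
      have key : mstar A i p + (((-θ : ℝ) : WithBot ℝ) + cc q) + mstar A q i
          = ((-θ : ℝ) : WithBot ℝ) + (cc q + (mstar A q i + mstar A i p)) := by abel
      rw [key]
      calc ((-θ : ℝ) : WithBot ℝ) + (cc q + (mstar A q i + mstar A i p))
          ≤ ((-θ : ℝ) : WithBot ℝ) + (cc q + mstar A q p) :=
            add_le_add_right (add_le_add_right (mstar_mstar_le A hn hTr q i p) _) _
        _ ≤ ((-θ : ℝ) : WithBot ℝ) + ((θ : ℝ) : WithBot ℝ) :=
            add_le_add_right (hθc q p) _
        _ = 0 := neg_theta_add_theta θ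

lemma coe_add_neg_right (w : WithBot ℝ) (r : ℝ) :
    (w + ((r : ℝ) : WithBot ℝ)) + ((-r : ℝ) : WithBot ℝ) = w := by
  have h : (r : ℝ) + (-r) = 0 := by ring
  rw [add_assoc, ← WithBot.coe_add, h, WithBot.coe_zero, add_zero]

lemma le_add_of_add_neg_le {w v : WithBot ℝ} {r : ℝ}
    (h : w + ((-r : ℝ) : WithBot ℝ) ≤ v) : w ≤ v + ((r : ℝ) : WithBot ℝ) := by
  have h0 : ((-r : ℝ) : WithBot ℝ) + ((r : ℝ) : WithBot ℝ) = 0 := by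
    rw [← WithBot.coe_add]; norm_num
  calc w = w + (((-r : ℝ) : WithBot ℝ) + ((r : ℝ) : WithBot ℝ)) := by
        rw [h0, add_zero]
    _ = (w + ((-r : ℝ) : WithBot ℝ)) + ((r : ℝ) : WithBot ℝ) := (add_assoc _ _ _).symm
    _ ≤ v + ((r : ℝ) : WithBot ℝ) := add_le_add_left h _

lemma le_add_of_neg_add_le {w v : WithBot ℝ} {r : ℝ}
    (h : ((-r : ℝ) : WithBot ℝ) + w ≤ v) : w ≤ ((r : ℝ) : WithBot ℝ) + v := by
  rw [add_comm] at h
  rw [add_comm]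
  exact le_add_of_add_neg_le h

lemma mpow_mono {M M' : Fin n → Fin n → WithBot ℝ} (h : ∀ i j, M i j ≤ M' i j) :
    ∀ m i j, mpow M m i j ≤ mpow M' m i j := by
  intro m
  induction m with
  | zero => intro i j; exact le_rfl
  | succ m ih =>
    intro i j
    show (Finset.univ.sup fun k => mpow M m i k + M k j) ≤
      Finset.univ.sup fun k => mpow M' m i k + M' k j
    refine Finset.sup_le fun k _ => le_trans (add_le_add (ih i k) (h k j))
      (Finset.le_sup (f := fun k => mpow M' m i k + M' k j) (Finset.mem_univ k))

lemma mstar_mono {M M' : Fin n → Fin n → WithBot ℝ} (h : ∀ i j, M i j ≤ M' i j)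
    (i j : Fin n) : mstar M i j ≤ mstar M' i j :=
  Finset.sup_le fun m hm => le_trans (mpow_mono h m i j)
    (Finset.le_sup (f := fun m => mpow M' m i j) hm)

lemma attain (hn : 1 ≤ n) (f : Fin n → WithBot ℝ) :
    ∃ l, Finset.univ.sup f = f l := by
  obtain ⟨l, _, h⟩ := Finset.exists_mem_eq_sup Finset.univ
    ⟨⟨0, hn⟩, Finset.mem_univ _⟩ f
  exact ⟨l, h⟩




theorem stmt_13 {n : ℕ} (C D : Fin n → Fin n → WithBot ℝ) (g : Fin n → WithBot ℝ)
    (hTr : ∀ m ∈ Finset.Icc 1 n, ∀ i, mpow (mmul D C) m i i ≤ 0)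
    (θ : ℝ)
    (hθ : (θ : WithBot ℝ) =
      Finset.univ.sup fun i => Finset.univ.sup fun j => Finset.univ.sup fun k =>
        C i k + mstar (mmul D C) k j)
    (x : Fin n → ℝ) :
    ((∀ i, (Finset.univ.sup fun j => mmul D C i j + ((x j : ℝ) : WithBot ℝ)) ⊔ g i ≤
        ((x i : ℝ) : WithBot ℝ)) ∧
      makespan C x = (θ : WithBot ℝ)) ↔
      ∃ u : Fin n → ℝ,
        (∀ i, g i ≤ ((u i : ℝ) : WithBot ℝ)) ∧
        (∀ i, ((x i : ℝ) : WithBot ℝ) =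
          Finset.univ.sup fun j =>
            mstar (fun a b =>
                (((-θ : ℝ) : WithBot ℝ) + Finset.univ.sup fun k => C k b) ⊔ mmul D C a b)
              i j + ((u j : ℝ) : WithBot ℝ)) := by
  rcases Nat.eq_zero_or_pos n with rfl | hn
  · exfalso
    rw [Finset.univ_eq_empty, Finset.sup_empty] at hθ
    exact WithBot.coe_ne_bot hθ
  set S : Fin n → Fin n → WithBot ℝ :=
    fun a b => (((-θ : ℝ) : WithBot ℝ) + Finset.univ.sup fun k => C k b) ⊔ mmul D C a b
    with hSdef
  have hSa : ∀ a b, mmul D C a b ≤ S a b := fun a b => le_sup_right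
  have hSb : ∀ a b, (((-θ : ℝ) : WithBot ℝ) + Finset.univ.sup fun k => C k b) ≤ S a b :=
    fun a b => le_sup_left
  have hθc : ∀ q p, (Finset.univ.sup fun k => C k q) + mstar (mmul D C) q p ≤
      ((θ : ℝ) : WithBot ℝ) := by
    intro q p
    rw [wfinsup_add]
    refine Finset.sup_le fun i _ => ?_
    rw [hθ]
    refine le_trans ?_ (Finset.le_sup
      (f := fun i' => Finset.univ.sup fun j => Finset.univ.sup fun k =>
        C i' k + mstar (mmul D C) k j) (Finset.mem_univ i))
    refine le_trans ?_ (Finset.le_sup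
      (f := fun j => Finset.univ.sup fun k => C i k + mstar (mmul D C) k j)
      (Finset.mem_univ p))
    exact Finset.le_sup (f := fun k => C i k + mstar (mmul D C) k p) (Finset.mem_univ q)
  have hTrS : ∀ m ∈ Finset.Icc 1 n, ∀ i, mpow S m i i ≤ 0 := by
    have h := S_diag (mmul D C) (fun b => Finset.univ.sup fun k => C k b) θ hn hTr hθc
    exact h
  have hSstar : ∀ i j l, S i j + mstar S j l ≤ mstar S i l :=
    fun i j l => step_mstar_le S hn hTrS i j l
  have hSS : ∀ i j l, mstar S i j + mstar S j l ≤ mstar S i l :=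
    fun i j l => mstar_mstar_le S hn hTrS i j l
  constructor
  · -- forward direction
    rintro ⟨hfeas, hmak⟩
    have hmakle : ∀ i' j i, C i' j + ((x j : ℝ) : WithBot ℝ) ≤
        ((θ : ℝ) : WithBot ℝ) + ((x i : ℝ) : WithBot ℝ) := by
      intro i' j i
      refine le_add_of_add_neg_le ?_
      calc C i' j + ((x j : ℝ) : WithBot ℝ) + ((-(x i) : ℝ) : WithBot ℝ)
          ≤ (Finset.univ.sup fun i'' => Finset.univ.sup fun j' =>
              C i'' j' + ((x j' : ℝ) : WithBot ℝ)) +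
            (Finset.univ.sup fun k => ((-(x k) : ℝ) : WithBot ℝ)) := by
            refine add_le_add ?_ (Finset.le_sup
              (f := fun k => ((-(x k) : ℝ) : WithBot ℝ)) (Finset.mem_univ i))
            refine le_trans (Finset.le_sup
              (f := fun j' => C i' j' + ((x j' : ℝ) : WithBot ℝ)) (Finset.mem_univ j)) ?_
            exact Finset.le_sup (f := fun i'' => Finset.univ.sup fun j' =>
              C i'' j' + ((x j' : ℝ) : WithBot ℝ)) (Finset.mem_univ i')
        _ = (θ : WithBot ℝ) := hmak
    have hSx : ∀ i, (Finset.univ.sup fun j => S i j + ((x j : ℝ) : WithBot ℝ)) ≤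
        ((x i : ℝ) : WithBot ℝ) := by
      intro i
      refine Finset.sup_le fun j _ => ?_
      rw [hSdef]
      rw [wsup_add]
      refine sup_le ?_ ?_
      · -- B part
        rw [add_assoc]
        have h1 : (Finset.univ.sup fun k => C k j) + ((x j : ℝ) : WithBot ℝ) ≤
            ((θ : ℝ) : WithBot ℝ) + ((x i : ℝ) : WithBot ℝ) := by
          rw [wfinsup_add]
          exact Finset.sup_le fun k _ => hmakle k j i
        calc ((-θ : ℝ) : WithBot ℝ) +
              ((Finset.univ.sup fun k => C k j) + ((x j : ℝ) : WithBot ℝ))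
            ≤ ((-θ : ℝ) : WithBot ℝ) +
              (((θ : ℝ) : WithBot ℝ) + ((x i : ℝ) : WithBot ℝ)) := add_le_add_right h1 _
          _ = ((x i : ℝ) : WithBot ℝ) := by
              rw [← add_assoc, neg_theta_add_theta, zero_add]
      · -- A part
        refine le_trans ?_ (hfeas i)
        refine le_trans ?_ le_sup_left
        exact Finset.le_sup (f := fun j' => mmul D C i j' + ((x j' : ℝ) : WithBot ℝ))
          (Finset.mem_univ j)
    have hpow : ∀ m i, (Finset.univ.sup fun j => mpow S m i j + ((x j : ℝ) : WithBot ℝ)) ≤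
        ((x i : ℝ) : WithBot ℝ) := by
      intro m
      induction m with
      | zero =>
        intro i
        refine Finset.sup_le fun j _ => ?_
        by_cases hij : i = j
        · subst hij
          simp [mpow, zero_add]
        · have : mpow S 0 i j = ⊥ := by simp [mpow, hij]
          simp [this]
      | succ m ih =>
        intro i
        refine Finset.sup_le fun j _ => ?_
        rw [mpow_succ_left]
        show (Finset.univ.sup fun k => S i k + mpow S m k j) + _ ≤ _
        rw [wfinsup_add]
        refine Finset.sup_le fun k _ => ?_
        rw [add_assoc]
        calc S i k + (mpow S m k j + ((x j : ℝ) : WithBot ℝ))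
            ≤ S i k + ((x k : ℝ) : WithBot ℝ) := by
              refine add_le_add_right ?_ _
              refine le_trans (Finset.le_sup
                (f := fun j' => mpow S m k j' + ((x j' : ℝ) : WithBot ℝ))
                (Finset.mem_univ j)) (ih k)
          _ ≤ Finset.univ.sup fun k' => S i k' + ((x k' : ℝ) : WithBot ℝ) :=
              Finset.le_sup (f := fun k' => S i k' + ((x k' : ℝ) : WithBot ℝ))
                (Finset.mem_univ k)
          _ ≤ ((x i : ℝ) : WithBot ℝ) := hSx i
    refine ⟨x, fun i => le_trans le_sup_right (hfeas i), fun i => ?_⟩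
    refine le_antisymm ?_ ?_
    · calc ((x i : ℝ) : WithBot ℝ) = 0 + ((x i : ℝ) : WithBot ℝ) := (zero_add _).symm
        _ ≤ mstar S i i + ((x i : ℝ) : WithBot ℝ) :=
            add_le_add_left (mstar_diag_nonneg S hn i) _
        _ ≤ Finset.univ.sup fun j => mstar S i j + ((x j : ℝ) : WithBot ℝ) :=
            Finset.le_sup (f := fun j => mstar S i j + ((x j : ℝ) : WithBot ℝ))
              (Finset.mem_univ i)
    · refine Finset.sup_le fun j _ => ?_
      show (Finset.range n).sup (fun m => mpow S m i j) + _ ≤ _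
      rw [wfinsup_add]
      refine Finset.sup_le fun m _ => ?_
      refine le_trans (Finset.le_sup
        (f := fun j' => mpow S m i j' + ((x j' : ℝ) : WithBot ℝ)) (Finset.mem_univ j))
        (hpow m i)
  · -- backward direction
    rintro ⟨u, hgu, hxu⟩
    have hux : ∀ i, ((u i : ℝ) : WithBot ℝ) ≤ ((x i : ℝ) : WithBot ℝ) := by
      intro i
      rw [hxu i]
      calc ((u i : ℝ) : WithBot ℝ) = 0 + ((u i : ℝ) : WithBot ℝ) := (zero_add _).symm
        _ ≤ mstar S i i + ((u i : ℝ) : WithBot ℝ) :=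
            add_le_add_left (mstar_diag_nonneg S hn i) _
        _ ≤ _ := Finset.le_sup (f := fun j => mstar S i j + ((u j : ℝ) : WithBot ℝ))
              (Finset.mem_univ i)
    have hstarx : ∀ k j, mstar S k j + ((x j : ℝ) : WithBot ℝ) ≤ ((x k : ℝ) : WithBot ℝ) := by
      intro k j
      obtain ⟨l, hl⟩ := attain hn fun l => mstar S j l + ((u l : ℝ) : WithBot ℝ)
      rw [hxu j, hl, ← add_assoc]
      calc mstar S k j + mstar S j l + ((u l : ℝ) : WithBot ℝ)
          ≤ mstar S k l + ((u l : ℝ) : WithBot ℝ) := add_le_add_left (hSS k j l) _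
        _ ≤ Finset.univ.sup fun l' => mstar S k l' + ((u l' : ℝ) : WithBot ℝ) :=
            Finset.le_sup (f := fun l' => mstar S k l' + ((u l' : ℝ) : WithBot ℝ))
              (Finset.mem_univ l)
        _ = ((x k : ℝ) : WithBot ℝ) := (hxu k).symm
    have hstepx : ∀ k j, S k j + ((x j : ℝ) : WithBot ℝ) ≤ ((x k : ℝ) : WithBot ℝ) := by
      intro k j
      obtain ⟨l, hl⟩ := attain hn fun l => mstar S j l + ((u l : ℝ) : WithBot ℝ)
      rw [hxu j, hl, ← add_assoc]
      calc S k j + mstar S j l + ((u l : ℝ) : WithBot ℝ)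
          ≤ mstar S k l + ((u l : ℝ) : WithBot ℝ) := add_le_add_left (hSstar k j l) _
        _ ≤ Finset.univ.sup fun l' => mstar S k l' + ((u l' : ℝ) : WithBot ℝ) :=
            Finset.le_sup (f := fun l' => mstar S k l' + ((u l' : ℝ) : WithBot ℝ))
              (Finset.mem_univ l)
        _ = ((x k : ℝ) : WithBot ℝ) := (hxu k).symm
    constructor
    · -- feasibility
      intro i
      refine sup_le ?_ (le_trans (hgu i) (hux i))
      refine Finset.sup_le fun j _ => ?_
      exact le_trans (add_le_add_left (hSa i j) _) (hstepx i j)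
    · -- makespan = θ
      refine le_antisymm ?_ ?_
      · -- ≤ θ
        show (Finset.univ.sup fun i => Finset.univ.sup fun j =>
            C i j + ((x j : ℝ) : WithBot ℝ)) +
          (Finset.univ.sup fun k => ((-(x k) : ℝ) : WithBot ℝ)) ≤ (θ : WithBot ℝ)
        rw [wfinsup_add]
        refine Finset.sup_le fun i _ => ?_
        rw [wfinsup_add]
        refine Finset.sup_le fun j _ => ?_
        rw [wadd_finsup]
        refine Finset.sup_le fun k _ => ?_
        -- C i j + x j + (-(x k)) ≤ θ
        have hcx : C i j + ((x j : ℝ) : WithBot ℝ) ≤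
            ((θ : ℝ) : WithBot ℝ) + ((x k : ℝ) : WithBot ℝ) := by
          have hBx : (((-θ : ℝ) : WithBot ℝ) + Finset.univ.sup fun k' => C k' j) +
              ((x j : ℝ) : WithBot ℝ) ≤ ((x k : ℝ) : WithBot ℝ) :=
            le_trans (add_le_add_left (hSb k j) _) (hstepx k j)
          rw [add_assoc] at hBx
          have := le_add_of_neg_add_le hBx
          refine le_trans ?_ this
          refine add_le_add_left ?_ _
          exact Finset.le_sup (f := fun k' => C k' j) (Finset.mem_univ i)
        calc C i j + ((x j : ℝ) : WithBot ℝ) + ((-(x k) : ℝ) : WithBot ℝ)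
            ≤ (((θ : ℝ) : WithBot ℝ) + ((x k : ℝ) : WithBot ℝ)) +
              ((-(x k) : ℝ) : WithBot ℝ) := add_le_add_left hcx _
          _ = (θ : WithBot ℝ) := coe_add_neg_right _ _
      · -- ≥ θ
        obtain ⟨i0, h1⟩ := attain hn fun i => Finset.univ.sup fun j =>
          Finset.univ.sup fun k => C i k + mstar (mmul D C) k j
        obtain ⟨j0, h2⟩ := attain hn fun j => Finset.univ.sup fun k =>
          C i0 k + mstar (mmul D C) k j
        obtain ⟨k0, h3⟩ := attain hn fun k => C i0 k + mstar (mmul D C) k j0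
        have hθval : (θ : WithBot ℝ) = C i0 k0 + mstar (mmul D C) k0 j0 := by
          rw [hθ, h1, h2, h3]
        have hx0 : mstar (mmul D C) k0 j0 + ((x j0 : ℝ) : WithBot ℝ) ≤
            ((x k0 : ℝ) : WithBot ℝ) :=
          le_trans (add_le_add_left (mstar_mono hSa k0 j0) _) (hstarx k0 j0)
        calc (θ : WithBot ℝ) = C i0 k0 + mstar (mmul D C) k0 j0 := hθval
          _ = (C i0 k0 + mstar (mmul D C) k0 j0 + ((x j0 : ℝ) : WithBot ℝ)) +
              ((-(x j0) : ℝ) : WithBot ℝ) := (coe_add_neg_right _ _).symm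
          _ ≤ (C i0 k0 + ((x k0 : ℝ) : WithBot ℝ)) + ((-(x j0) : ℝ) : WithBot ℝ) := by
              refine add_le_add_left ?_ _
              rw [add_assoc]
              exact add_le_add_right hx0 _
          _ ≤ makespan C x := by
              refine add_le_add ?_ (Finset.le_sup
                (f := fun k => ((-(x k) : ℝ) : WithBot ℝ)) (Finset.mem_univ j0))
              refine le_trans (Finset.le_sup
                (f := fun j => C i0 j + ((x j : ℝ) : WithBot ℝ)) (Finset.mem_univ k0)) ?_
              exact Finset.le_sup (f := fun i => Finset.univ.sup fun j =>
                C i j + ((x j : ℝ) : WithBot ℝ)) (Finset.mem_univ i0)
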